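/- There exists a constant C > 0 such that for every integer n ≥ 2, ϑ·(1 − (2/3)·2^{−n} − C·3^{−n}) ≤ ϑ_n ≤ ϑ·(1 − (2/3)·2^{−n} + C·3^{−n}); in other words, ϑ_n = ϑ·(1 − (2/3)·2^{−n} + O(3^{−n})) as n → ∞. -/

import Mathlib

open Filter Real Function

section helpers

variable {ι : Type*}

lemma my_one_le_prod (s : Finset ι) (f : ι → ℝ) (h : ∀ i ∈ s, 1 ≤ f i) :
    1 ≤ ∏ i ∈ s, f i := by
  calc (1:ℝ) = ∏ _i ∈ s, (1:ℝ) := (Finset.prod_const_one).symm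
    _ ≤ ∏ i ∈ s, f i := Finset.prod_le_prod (fun i _ => zero_le_one) h

/-- An infinite product of factors in `[0,1]` converges (possibly to 0). -/
lemma multipliable_of_le_one (f : ι → ℝ) (h0 : ∀ i, 0 ≤ f i) (h1 : ∀ i, f i ≤ 1) :
    Multipliable f := by
  classical
  refine ⟨_, tendsto_atTop_ciInf ?_ ?_⟩
  · intro s t hst
    simp only []
    rw [← Finset.prod_sdiff hst]
    exact mul_le_of_le_one_left (Finset.prod_nonneg fun i _ => h0 i)
      (Finset.prod_le_one (fun i _ => h0 i) (fun i _ => h1 i))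
  · exact ⟨0, fun x ⟨s, hs⟩ => hs ▸ Finset.prod_nonneg fun i _ => h0 i⟩

/-- An infinite product of factors `1 + g i` with `g` summable nonnegative converges. -/
lemma multipliable_one_add (g : ι → ℝ) (hg0 : ∀ i, 0 ≤ g i) (hg : Summable g) :
    Multipliable (fun i => 1 + g i) := by
  classical
  refine ⟨_, tendsto_atTop_ciSup ?_ ?_⟩
  · intro s t hst
    simp only []
    rw [← Finset.prod_sdiff hst]
    refine le_mul_of_one_le_left (Finset.prod_nonneg fun i _ => by nlinarith [hg0 i]) ?_
    exact my_one_le_prod _ _ (fun i _ => by nlinarith [hg0 i])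
  · refine ⟨Real.exp (∑' i, g i), fun x ⟨s, hs⟩ => ?_⟩
    subst hs
    calc ∏ i ∈ s, (1 + g i) ≤ ∏ i ∈ s, Real.exp (g i) :=
          Finset.prod_le_prod (fun i _ => by nlinarith [hg0 i])
            (fun i _ => by nlinarith [Real.add_one_le_exp (g i)])
      _ = Real.exp (∑ i ∈ s, g i) := by rw [Real.exp_sum]
      _ ≤ Real.exp (∑' i, g i) := Real.exp_le_exp.2 (Summable.sum_le_tsum s (fun i _ => hg0 i) hg)

lemma one_sub_sum_le_prod (x : ι → ℝ) (h0 : ∀ i, 0 ≤ x i) (h1 : ∀ i, x i ≤ 1) (s : Finset ι) :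
    1 - ∑ i ∈ s, x i ≤ ∏ i ∈ s, (1 - x i) := by
  classical
  induction s using Finset.cons_induction with
  | empty => simp
  | cons a s ha ih =>
    rw [Finset.prod_cons, Finset.sum_cons]
    have hs0 : 0 ≤ ∑ i ∈ s, x i := Finset.sum_nonneg fun i _ => h0 i
    nlinarith [mul_le_mul_of_nonneg_left ih (sub_nonneg.2 (h1 a)), mul_nonneg (h0 a) hs0]

end helpers

/-- `ϑ_n`: the product over all primes `p` of `1 + (p^(n-1) - 1)/(p^(n+1) - p^n)`. -/
noncomputable def thetaN (n : ℕ) : ℝ :=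
  ∏' p : Nat.Primes, (1 + ((p : ℝ) ^ (n - 1) - 1) / ((p : ℝ) ^ (n + 1) - (p : ℝ) ^ n))

/-- `ϑ`: the product over all primes `p` of `1 + 1/(p² - p)`. -/
noncomputable def theta : ℝ :=
  ∏' p : Nat.Primes, (1 + 1 / ((p : ℝ) ^ 2 - p))

noncomputable def auxX (m : ℕ) (p : Nat.Primes) : ℝ :=
  1 / ((p : ℝ) ^ (m + 1) * ((p : ℝ) ^ 2 - (p : ℝ) + 1))

/-- the prime 2 as an element of `Nat.Primes` -/
def ptwo : Nat.Primes := ⟨2, Nat.prime_two⟩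

lemma prime_two_le (p : Nat.Primes) : (2:ℝ) ≤ (p:ℝ) := by exact_mod_cast p.prop.two_le

lemma auxX_pos (m : ℕ) (p : Nat.Primes) : 0 < auxX m p := by
  have hp2 := prime_two_le p
  have h1 : (0:ℝ) < (p:ℝ) ^ (m+1) := by positivity
  have h2 : (0:ℝ) < (p:ℝ)^2 - (p:ℝ) + 1 := by nlinarith
  exact div_pos one_pos (by positivity)

lemma auxX_le (m : ℕ) (p : Nat.Primes) : auxX m p ≤ 1 / (p:ℝ)^2 := by
  have hp2 := prime_two_le p
  have hp0 : (0:ℝ) < (p:ℝ) := by linarith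
  have hself : (p:ℝ) ≤ (p:ℝ)^(m+1) := le_self_pow₀ (by linarith) (Nat.succ_ne_zero m)
  have hq : (p:ℝ) ≤ (p:ℝ)^2 - (p:ℝ) + 1 := by nlinarith
  have hkey : (p:ℝ)^2 ≤ (p:ℝ)^(m+1) * ((p:ℝ)^2 - (p:ℝ) + 1) := by nlinarith
  rw [auxX]
  exact one_div_le_one_div_of_le (by positivity) hkey

lemma summable_one_div_sq : Summable (fun p : Nat.Primes => 1 / (p:ℝ)^2) := by
  have h : Summable (fun k : ℕ => 1 / (k:ℝ)^2) :=
    Real.summable_one_div_nat_pow.mpr one_lt_two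
  exact h.comp_injective Subtype.coe_injective

lemma auxX_two (m : ℕ) : auxX m ptwo = (2/3) / 2 ^ (m + 2) := by
  have h2 : ((ptwo : Nat.Primes) : ℝ) = 2 := by
    norm_num [ptwo]
  rw [auxX, h2]
  have h23 : (2:ℝ)^(m+2) = 2^(m+1) * 2 := by rw [pow_succ]
  rw [h23]
  have : (0:ℝ) < 2^(m+1) := by positivity
  field_simp
  ring

lemma prime_three_le (p : Nat.Primes) (hp : p ≠ ptwo) : (3:ℝ) ≤ (p:ℝ) := by
  have h1 : (p : ℕ) ≠ 2 := by
    intro h; exact hp (Subtype.ext h)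
  have h2 : 2 ≤ (p : ℕ) := p.prop.two_le
  have : 3 ≤ (p : ℕ) := by omega
  exact_mod_cast this

lemma auxX_le_odd (m : ℕ) (p : Nat.Primes) (hp : p ≠ ptwo) :
    auxX m p ≤ 9 / 3 ^ (m + 2) * (1 / (p:ℝ)^2) := by
  have hp3 := prime_three_le p hp
  have hp0 : (0:ℝ) < (p:ℝ) := by linarith
  have h3m : (3:ℝ)^m ≤ (p:ℝ)^m := pow_le_pow_left₀ (by norm_num) hp3 m
  have hPm : (0:ℝ) < (p:ℝ)^m := by positivity
  have hq : (p:ℝ) ≤ (p:ℝ)^2 - (p:ℝ) + 1 := by nlinarith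
  have hq0 : (0:ℝ) < (p:ℝ)^2 - (p:ℝ) + 1 := by nlinarith
  have hkey : (3:ℝ)^m * (p:ℝ)^2 ≤ (p:ℝ)^(m+1) * ((p:ℝ)^2 - (p:ℝ) + 1) := by
    have h1 : (p:ℝ)^(m+1) = (p:ℝ)^m * (p:ℝ) := pow_succ _ _
    rw [h1]
    calc (3:ℝ)^m * (p:ℝ)^2 = (3:ℝ)^m * ((p:ℝ) * (p:ℝ)) := by ring
      _ ≤ (p:ℝ)^m * ((p:ℝ) * ((p:ℝ)^2 - (p:ℝ) + 1)) := by
          apply mul_le_mul h3m _ (by positivity) (by positivity)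
          exact mul_le_mul_of_nonneg_left hq (by linarith)
      _ = (p:ℝ)^m * (p:ℝ) * ((p:ℝ)^2 - (p:ℝ) + 1) := by ring
  have hle : auxX m p ≤ 1 / ((3:ℝ)^m * (p:ℝ)^2) := by
    rw [auxX]
    exact one_div_le_one_div_of_le (by positivity) hkey
  refine hle.trans_eq ?_
  have h1 : (3:ℝ)^(m+2) = 3^m * 9 := by rw [pow_succ, pow_succ]; ring
  rw [h1]
  have h3 : (0:ℝ) < (3:ℝ)^m := by positivity
  field_simp

set_option maxHeartbeats 1000000 in
lemma sum_auxX_le (m : ℕ) :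
    ∑' p : Nat.Primes, auxX m p ≤ (2/3) / 2 ^ (m + 2) + 18 / 3 ^ (m + 2) := by
  classical
  set g2 : Nat.Primes → ℝ := fun p => if p = ptwo then (2/3) / 2^(m+2) else 0 with hg2def
  set g3 : Nat.Primes → ℝ := fun p => if p = ptwo then 0 else 9 / 3^(m+2) * (1 / (p:ℝ)^2)
    with hg3def
  have hg2 : Summable g2 := (hasSum_ite_eq ptwo ((2/3) / 2^(m+2))).summable
  have hg3 : Summable g3 := by
    apply Summable.of_nonneg_of_le (f := fun p : Nat.Primes => 9 / 3^(m+2) * (1 / (p:ℝ)^2))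
    · intro p
      by_cases h : p = ptwo <;> simp [hg3def, h] <;> positivity
    · intro p
      by_cases h : p = ptwo <;> simp [hg3def, h] <;> positivity
    · exact summable_one_div_sq.mul_left _
  have hxs : Summable (auxX m) :=
    Summable.of_nonneg_of_le (fun p => (auxX_pos m p).le) (auxX_le m) summable_one_div_sq
  have hpt : ∀ p, auxX m p ≤ g2 p + g3 p := by
    intro p
    by_cases h : p = ptwo
    · subst h; simp [hg2def, hg3def, auxX_two m]
    · simp only [hg2def, hg3def, if_neg h]
      have := auxX_le_odd m p h
      linarith
  calc ∑' p, auxX m p ≤ ∑' p, (g2 p + g3 p) := Summable.tsum_le_tsum hpt hxs (hg2.add hg3)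
    _ = (∑' p, g2 p) + ∑' p, g3 p := Summable.tsum_add hg2 hg3
    _ ≤ (2/3) / 2^(m+2) + 18 / 3^(m+2) := by
        have h2 : ∑' p, g2 p = (2/3) / 2^(m+2) := by
          rw [hg2def]
          exact tsum_eq_single ptwo (fun b hb => if_neg hb)
        have h3 : ∑' p, g3 p ≤ 18 / 3^(m+2) := by
          have step1 : ∑' p, g3 p ≤ ∑' p : Nat.Primes, 9 / 3^(m+2) * (1 / (p:ℝ)^2) := by
            apply Summable.tsum_le_tsum _ hg3 (summable_one_div_sq.mul_left _)
            intro p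
            by_cases h : p = ptwo <;> simp [hg3def, h] <;> positivity
          have step2 : ∑' p : Nat.Primes, 9 / 3^(m+2) * (1 / (p:ℝ)^2)
              = 9 / 3^(m+2) * ∑' p : Nat.Primes, (1 / (p:ℝ)^2) := tsum_mul_left
          have step3 : ∑' p : Nat.Primes, (1 / (p:ℝ)^2) ≤ 2 := by
            have hinj : ∑' p : Nat.Primes, (1 / (p:ℝ)^2) ≤ ∑' k : ℕ, (1 / (k:ℝ)^2) := by
              apply Summable.tsum_le_tsum_of_inj (f := fun p : Nat.Primes => 1/(p:ℝ)^2)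
                (g := fun k : ℕ => 1/(k:ℝ)^2) (Subtype.val : Nat.Primes → ℕ)
                Subtype.coe_injective (fun c _ => by positivity) (fun p => le_rfl)
                summable_one_div_sq (Real.summable_one_div_nat_pow.mpr one_lt_two)
            have hz : ∑' k : ℕ, (1 / (k:ℝ)^2) = Real.pi^2 / 6 := hasSum_zeta_two.tsum_eq
            have hpi : Real.pi < 3.15 := Real.pi_lt_d2
            have hpi0 : 0 < Real.pi := Real.pi_pos
            nlinarith
          have h9 : (0:ℝ) ≤ 9 / 3^(m+2) := by positivity
          calc ∑' p, g3 p ≤ 9 / 3^(m+2) * ∑' p : Nat.Primes, (1 / (p:ℝ)^2) := by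
                rw [← step2]; exact step1
            _ ≤ 9 / 3^(m+2) * 2 := mul_le_mul_of_nonneg_left step3 h9
            _ = 18 / 3^(m+2) := by ring
        linarith

lemma auxX_lt_one (m : ℕ) (p : Nat.Primes) : auxX m p ≤ 1/4 := by
  have hp2 := prime_two_le p
  have h4 : (4:ℝ) ≤ (p:ℝ)^2 := by nlinarith
  have := auxX_le m p
  have h14 : 1/(p:ℝ)^2 ≤ 1/4 := one_div_le_one_div_of_le (by norm_num) h4
  linarith

lemma summable_auxX (m : ℕ) : Summable (auxX m) :=
  Summable.of_nonneg_of_le (fun p => (auxX_pos m p).le) (auxX_le m) summable_one_div_sq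

lemma mult_B : Multipliable (fun p : Nat.Primes => 1 + 1 / ((p:ℝ)^2 - (p:ℝ))) := by
  apply multipliable_one_add
  · intro p
    have hp2 := prime_two_le p
    have : (0:ℝ) < (p:ℝ)^2 - (p:ℝ) := by nlinarith
    positivity
  · apply Summable.of_nonneg_of_le (f := fun p : Nat.Primes => 2 * (1/(p:ℝ)^2))
    · intro p
      have hp2 := prime_two_le p
      have : (0:ℝ) < (p:ℝ)^2 - (p:ℝ) := by nlinarith
      positivity
    · intro p
      have hp2 := prime_two_le p
      have h1 : (0:ℝ) < (p:ℝ)^2 - (p:ℝ) := by nlinarith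
      have h2 : (0:ℝ) < (p:ℝ)^2 := by nlinarith
      rw [mul_one_div, div_le_div_iff₀ h1 h2]
      nlinarith
    · exact summable_one_div_sq.mul_left 2

lemma mult_R (m : ℕ) : Multipliable (fun p : Nat.Primes => 1 - auxX m p) := by
  apply multipliable_of_le_one
  · intro p; have := auxX_lt_one m p; linarith
  · intro p; have := auxX_pos m p; linarith

lemma theta_ge_one : 1 ≤ theta := by
  have h : 1 ≤ ∏' p : Nat.Primes, (1 + 1 / ((p:ℝ)^2 - (p:ℝ))) := by
    refine ge_of_tendsto' mult_B.hasProd (fun s => my_one_le_prod s _ (fun p _ => ?_))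
    have hp2 := prime_two_le p
    have h0 : (0:ℝ) < (p:ℝ)^2 - (p:ℝ) := by nlinarith
    have : (0:ℝ) ≤ 1 / ((p:ℝ)^2 - (p:ℝ)) := by positivity
    linarith
  exact h

lemma theta_factor (m : ℕ) :
    thetaN (m+2) = theta * ∏' p : Nat.Primes, (1 - auxX m p) := by
  rw [thetaN, theta, ← Multipliable.tprod_mul mult_B (mult_R m)]
  refine tprod_congr (fun p => ?_)
  have hp2 : (2:ℝ) ≤ (p:ℝ) := prime_two_le p
  have hp0 : (0:ℝ) < (p:ℝ) := by linarith
  have h1 : (m + 2 - 1 : ℕ) = m + 1 := rfl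
  have h2 : (m + 2 + 1 : ℕ) = m + 3 := rfl
  rw [h1, h2, auxX]
  have hP : (0:ℝ) < (p:ℝ)^(m+1) := pow_pos hp0 _
  have hq : (0:ℝ) < (p:ℝ)^2 - (p:ℝ) := by nlinarith
  have hq1 : (0:ℝ) < (p:ℝ)^2 - (p:ℝ) + 1 := by nlinarith
  have hden : (p:ℝ)^(m+3) - (p:ℝ)^(m+2) ≠ 0 := by
    have h : (p:ℝ)^(m+3) - (p:ℝ)^(m+2) = (p:ℝ)^(m+1) * ((p:ℝ)^2 - (p:ℝ)) := by ring
    rw [h]; positivity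
  rw [show (p:ℝ)^(m+3) - (p:ℝ)^(m+2) = (p:ℝ)^(m+1) * ((p:ℝ)^2 - (p:ℝ)) by ring] at hden ⊢
  generalize (p:ℝ)^(m+1) = a at *
  generalize (p:ℝ)^2 - (p:ℝ) = b at *
  field_simp
  ring

lemma prod_R_le (m : ℕ) :
    ∏' p : Nat.Primes, (1 - auxX m p) ≤ 1 - (2/3) / 2^(m+2) := by
  rw [← auxX_two m]
  refine le_of_tendsto (mult_R m).hasProd (Filter.eventually_atTop.2 ⟨{ptwo}, fun s hs => ?_⟩)
  have h2s : ptwo ∈ s := hs (Finset.mem_singleton_self ptwo)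
  rw [← Finset.mul_prod_erase s _ h2s]
  have h0 : (0:ℝ) ≤ 1 - auxX m ptwo := by have := auxX_lt_one m ptwo; linarith
  refine mul_le_of_le_one_right h0 (Finset.prod_le_one ?_ ?_)
  · intro p _; have := auxX_lt_one m p; linarith
  · intro p _; have := auxX_pos m p; linarith

lemma prod_R_ge (m : ℕ) :
    1 - ∑' p : Nat.Primes, auxX m p ≤ ∏' p : Nat.Primes, (1 - auxX m p) := by
  refine ge_of_tendsto' (mult_R m).hasProd (fun s => ?_)
  have hsum : ∑ p ∈ s, auxX m p ≤ ∑' p, auxX m p :=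
    Summable.sum_le_tsum s (fun p _ => (auxX_pos m p).le) (summable_auxX m)
  refine le_trans (by linarith) (one_sub_sum_le_prod (auxX m)
    (fun p => (auxX_pos m p).le) (fun p => by have := auxX_lt_one m p; linarith) s)

theorem thetaN_asymptotic :
    ∃ C > 0, ∀ n : ℕ, 2 ≤ n →
      theta * (1 - (2 / 3) / 2 ^ n - C / 3 ^ n) ≤ thetaN n ∧
        thetaN n ≤ theta * (1 - (2 / 3) / 2 ^ n + C / 3 ^ n) := by
  refine ⟨18, by norm_num, fun n hn => ?_⟩
  obtain ⟨m, rfl⟩ : ∃ m, n = m + 2 := ⟨n - 2, by omega⟩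
  have hθ : (1:ℝ) ≤ theta := theta_ge_one
  have hθ0 : (0:ℝ) ≤ theta := by linarith
  have hfac := theta_factor m
  have hup := prod_R_le m
  have hlo := prod_R_ge m
  have hsum := sum_auxX_le m
  constructor
  · rw [hfac]
    refine mul_le_mul_of_nonneg_left ?_ hθ0
    refine le_trans ?_ hlo
    linarith
  · rw [hfac]
    refine mul_le_mul_of_nonneg_left ?_ hθ0
    have h18 : (0:ℝ) ≤ 18 / 3^(m+2) := by positivity
    linarith
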